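/- Let n ≥ 2, let 0 ≤ k̲ < k̄ (k̄ possibly infinite), let ε > 0, and let Γ ∈ ℝ^{n×n} be symmetric positive definite. Suppose: (i) true densities ρ^l_k ∈ [0, ϱ_m] for all l ∈ {1,…,n} and all k, mean estimates ρ̂^l_k have errors η^l_k = ρ̂^l_k − ρ^l_k, and the Euclidean norm of the error vector satisfies ‖η_{k̲}‖ < ε; (ii) the boundary error pair η̌_k = (η^1_k, η^n_k) obeys, for k̲ ≤ k < k̄, the 2-dimensional Kalman-filter error recursion η̌_{k+1} = (I − Ǩ_{k+1})·η̌_k, where Ǩ_{k+1} = Γ̌_{k+1|k}(Γ̌_{k+1|k} + Ř_{k+1})^{−1}, Γ̌_{k+1|k} = Γ̌_{k|k} + Q̌_k, Γ̌_{k+1|k+1} = Γ̌_{k+1|k} − Ǩ_{k+1}Γ̌_{k+1|k}, with q_1·I < Q̌_k < q_2·I, r_1·I < Ř_{k+1} < r_2·I and Γ̌_{k̲|k̲} symmetric positive definite; (iii) for each k with k̲ ≤ k < k̄ and each l ∈ {2,…,n−1}, ρ̂^l_{k+1} = ρ̂^l_k + (Δt/Δx)·(𝔣(ρ̂^{l−1}_k,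 ρ̂^l_k) − 𝔣(ρ̂^l_k, ρ̂^{l+1}_k)) − K_{k+1}(l,1)·η^1_k − K_{k+1}(l,2)·η^n_k, where the gain matrices satisfy ‖K_{k+1}‖_∞ ≤ 𝔨(Γ) (maximum absolute row-sum norm). Then, with c_0 = max{1, (č_2/č_1)^{1/2}·r_2·q_1^{−1}} and 𝔠(Γ) = c_0·Δx·𝔨(Γ)/(Δt·min{v_m, w}), the error satisfies ‖η_k‖ < 𝔥(ε, Γ) = √n·(ϱ_m + ε·(c_0 + (n−2)·𝔠(Γ))) for all k with k̲ < k ≤ k̄. -/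

import Mathlib

open Matrix Filter Finset

noncomputable section

/-- Loewner strict order `A < B`. -/
def loewnerLT {m : Type*} [Fintype m] (A B : Matrix m m ℝ) : Prop := (B - A).PosDef

/-- Loewner order `A ≤ B`. -/
def loewnerLE {m : Type*} [Fintype m] (A B : Matrix m m ℝ) : Prop := (B - A).PosSemidef

/-- smallest (real) eigenvalue of a matrix -/
def lamMin {N : ℕ} (M : Matrix (Fin N) (Fin N) ℝ) : ℝ :=
  sInf {t : ℝ | ∃ v : Fin N → ℝ, v ≠ 0 ∧ M.mulVec v = t • v}

/-- largest (real) eigenvalue of a matrix -/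
def lamMax {N : ℕ} (M : Matrix (Fin N) (Fin N) ℝ) : ℝ :=
  sSup {t : ℝ | ∃ v : Fin N → ℝ, v ≠ 0 ∧ M.mulVec v = t • v}

/-- spectral norm (ℓ²-operator norm) of a square matrix -/
def matSpecNormL2 {N : ℕ} (M : Matrix (Fin N) (Fin N) ℝ) : ℝ :=
  ‖Matrix.toEuclideanCLM (𝕜 := ℝ) M‖

/-- largest singular value -/
def sigmaMax {N : ℕ} (M : Matrix (Fin N) (Fin N) ℝ) : ℝ := matSpecNormL2 M

/-- maximum absolute row-sum matrix norm -/
def rowSumNorm {m n : ℕ} (M : Matrix (Fin m) (Fin n) ℝ) : ℝ :=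
  ⨆ i : Fin m, ∑ j, |M i j|

/-- Euclidean norm of a vector -/
def euclNorm {N : ℕ} (v : Fin N → ℝ) : ℝ := Real.sqrt (∑ j, (v j) ^ 2)

/-- the free-flow mode matrix A_FF -/
def matAFF (N : ℕ) (θv : ℝ) : Matrix (Fin N) (Fin N) ℝ :=
  Matrix.of fun i j =>
    if (i : ℕ) = 0 ∧ (j : ℕ) = 0 then 1
    else if i = j then 1 - θv
    else if (i : ℕ) = (j : ℕ) + 1 then θv
    else 0

/-- the congestion mode matrix A_CC -/
def matACC (N : ℕ) (θw : ℝ) : Matrix (Fin N) (Fin N) ℝ :=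
  Matrix.of fun i j =>
    if (i : ℕ) = N - 1 ∧ (j : ℕ) = N - 1 then 1
    else if i = j then 1 - θw
    else if (j : ℕ) = (i : ℕ) + 1 then θw
    else 0

/-- the congestion–freeflow mode matrix A_CF^s = diag(Δ_s, Θ_{N−s}) -/
def matACF (N s : ℕ) (θv θw : ℝ) : Matrix (Fin N) (Fin N) ℝ :=
  Matrix.of fun i j =>
    if (i : ℕ) < s ∧ (j : ℕ) < s then
      (if i = j then 1 - θw else if (j : ℕ) = (i : ℕ) + 1 then θw else 0)
    else if s ≤ (i : ℕ) ∧ s ≤ (j : ℕ) then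
      (if i = j then 1 - θv else if (i : ℕ) = (j : ℕ) + 1 then θv else 0)
    else 0

/-- set of observable-mode state transition matrices 𝒜_O -/
def setAO (N : ℕ) (θv θw : ℝ) : Set (Matrix (Fin N) (Fin N) ℝ) :=
  {matAFF N θv, matACC N θw} ∪ {M | ∃ s, 1 ≤ s ∧ s ≤ N - 1 ∧ M = matACF N s θv θw}

/-- boundary output matrix H_b, rows e_1ᵀ and e_nᵀ -/
def matHb (N : ℕ) : Matrix (Fin 2) (Fin N) ℝ :=
  Matrix.of fun i j =>
    if (i : ℕ) = 0 ∧ (j : ℕ) = 0 then 1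
    else if (i : ℕ) = 1 ∧ (j : ℕ) = N - 1 then 1
    else 0

/-- standing assumption on output matrices: pairwise distinct standard basis rows,
including e_1ᵀ and e_nᵀ -/
def standingH {mk N : ℕ} (H : Matrix (Fin mk) (Fin N) ℝ) : Prop :=
  (∀ p : Fin mk, ∃ l : Fin N, H p = fun j => if j = l then 1 else 0) ∧
  (∀ p q : Fin mk, H p = H q → p = q) ∧
  (∃ p : Fin mk, H p = fun j : Fin N => if (j : ℕ) = 0 then 1 else 0) ∧
  (∃ p : Fin mk, H p = fun j : Fin N => if (j : ℕ) = N - 1 then 1 else 0)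

/-- ascending product of inverses  M_lo⁻¹ · M_{lo+1}⁻¹ ⋯ M_hi⁻¹ -/
def prodInvAsc {N : ℕ} (M : ℕ → Matrix (Fin N) (Fin N) ℝ) (lo hi : ℕ) :
    Matrix (Fin N) (Fin N) ℝ :=
  ((List.range (hi + 1 - lo)).map (fun t => (M (lo + t))⁻¹)).prod

/-- descending product  M_hi · M_{hi−1} ⋯ M_lo -/
def prodDesc {N : ℕ} (M : ℕ → Matrix (Fin N) (Fin N) ℝ) (hi lo : ℕ) :
    Matrix (Fin N) (Fin N) ℝ :=
  ((List.range (hi + 1 - lo)).map (fun t => M (hi - t))).prod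

/-- a_𝓘 -/
def aI (N : ℕ) (θv θw r2 : ℝ) : ℝ :=
  r2⁻¹ * sInf {t : ℝ | ∃ M : ℕ → Matrix (Fin N) (Fin N) ℝ,
    (∀ ι, 1 ≤ ι → ι ≤ max 1 (N - 2) → M ι ∈ setAO N θv θw) ∧
    t = lamMin ((matHb N)ᵀ * matHb N +
      ∑ ι ∈ Finset.Icc 1 (max 1 (N - 2)),
        (prodInvAsc M ι (max 1 (N - 2)))ᵀ * (matHb N)ᵀ * matHb N *
          prodInvAsc M ι (max 1 (N - 2)))}

/-- b_𝓘 -/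
def bI (N : ℕ) (θv θw r1 : ℝ) : ℝ :=
  r1⁻¹ * sSup {t : ℝ | ∃ M : ℕ → Matrix (Fin N) (Fin N) ℝ,
    (∀ ι, 1 ≤ ι → ι ≤ max 1 (N - 2) → M ι ∈ setAO N θv θw) ∧
    t = lamMax (1 +
      ∑ ι ∈ Finset.Icc 1 (max 1 (N - 2)),
        (prodInvAsc M ι (max 1 (N - 2)))ᵀ * prodInvAsc M ι (max 1 (N - 2)))}

/-- a_𝓒 -/
def aC (N : ℕ) (θv θw q1 : ℝ) : ℝ :=
  q1 * sInf {t : ℝ | ∃ M : ℕ → Matrix (Fin N) (Fin N) ℝ,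
    (∀ ι, 1 ≤ ι → ι ≤ max 1 (N - 2) → M ι ∈ setAO N θv θw) ∧
    t = lamMin (1 +
      ∑ ι ∈ Finset.Icc 1 (max 1 (N - 2) - 1),
        prodDesc M (max 1 (N - 2) - 1) ι * (prodDesc M (max 1 (N - 2) - 1) ι)ᵀ)}

/-- b_𝓒 -/
def bC (N : ℕ) (θv θw q2 : ℝ) : ℝ :=
  q2 * sSup {t : ℝ | ∃ M : ℕ → Matrix (Fin N) (Fin N) ℝ,
    (∀ ι, 1 ≤ ι → ι ≤ max 1 (N - 2) → M ι ∈ setAO N θv θw) ∧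
    t = lamMax (1 +
      ∑ ι ∈ Finset.Icc 1 (max 1 (N - 2) - 1),
        prodDesc M (max 1 (N - 2) - 1) ι * (prodDesc M (max 1 (N - 2) - 1) ι)ᵀ)}

/-- constant c₁ -/
def cLow (N : ℕ) (θv θw q1 q2 r1 r2 : ℝ) : ℝ :=
  min (aI N θv θw r2) (aC N θv θw q1) /
    (1 + min (aI N θv θw r2) (aC N θv θw q1) * max (bI N θv θw r1) (bC N θv θw q2))

/-- constant c₂ -/
def cHigh (N : ℕ) (θv θw q1 q2 r1 r2 : ℝ) : ℝ :=
  (1 + min (aI N θv θw r2) (aC N θv θw q1) * max (bI N θv θw r1) (bC N θv θw q2)) /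
    min (aI N θv θw r2) (aC N θv θw q1)


/-- the explicit Kalman-gain bound `𝔨(M)` of Lemma 4 -/
def frakK (N : ℕ) (Δt Δx vm w q1 q2 r1 r2 : ℝ) (M : Matrix (Fin N) (Fin N) ℝ) : ℝ :=
  let ca : ℝ := min (2 * r2⁻¹) q1
  let cb : ℝ := max (2 * r1⁻¹) q2
  let c1 : ℝ := ca / (1 + ca * cb)
  let c2 : ℝ := (1 + ca * cb) / ca
  let c3 : ℝ := c1⁻¹ + q1⁻¹ * (c1⁻¹) ^ 2
  let tbar : ℝ := Real.sqrt 2 * ((N : ℝ) - 2) * Real.sqrt (c2 / c1)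
  let qbar : ℝ := Real.sqrt (1 - c3 * c2⁻¹)
  let pbar : ℝ := 2 * r2 * q1⁻¹ * (Δt / Δx) * max vm w * (r2 + q2) + q2
  let gbar : ℝ :=
    (N : ℝ) * Real.sqrt N * matSpecNormL2 M * (1 + (Δt / Δx) * (w + vm)) ^ 2 +
    (N : ℝ) * Real.sqrt N * q2 * (1 + (Δt / Δx) * (w + vm)) + Real.sqrt N * q2
  Real.sqrt 2 * r1⁻¹ *
    max (max (max (Real.sqrt N * (matSpecNormL2 M * (1 + (Δt / Δx) * (w + vm)) + q2))
      (Real.sqrt 2 * (r2 + q2))) (max (2 * gbar) (2 * (tbar * qbar * gbar + pbar))))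
      (2 * (tbar * pbar * qbar / (1 - qbar) + pbar))

/-- Godunov numerical flux for the triangular fundamental diagram. -/
def gflux (vm w ϱm qm a b : ℝ) : ℝ := min (vm * a) (min (w * (ϱm - b)) qm)

/-- the constant `c₀ = max{1, (č₂/č₁)^{1/2}·r₂·q₁⁻¹}` -/
def cZero (q1 q2 r1 r2 : ℝ) : ℝ :=
  let ca : ℝ := min (2 * r2⁻¹) q1
  let cb : ℝ := max (2 * r1⁻¹) q2
  max 1 (Real.sqrt (((1 + ca * cb) / ca) / (ca / (1 + ca * cb))) * r2 * q1⁻¹)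

/-- the function `𝔠(Γ) = c₀·Δx·𝔨(Γ)/(Δt·min{v_m,w})` -/
def frakCc (N : ℕ) (Δt Δx vm w q1 q2 r1 r2 : ℝ) (M : Matrix (Fin N) (Fin N) ℝ) : ℝ :=
  cZero q1 q2 r1 r2 * Δx * frakK N Δt Δx vm w q1 q2 r1 r2 M / (Δt * min vm w)

variable {N : ℕ}

lemma dotSelf_nonneg (v : Fin N → ℝ) : 0 ≤ v ⬝ᵥ v := by
  unfold dotProduct
  exact Finset.sum_nonneg fun i _ => mul_self_nonneg _

lemma dotSelf_pos {v : Fin N → ℝ} (hv : v ≠ 0) : 0 < v ⬝ᵥ v := by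
  rcases eq_or_lt_of_le (dotSelf_nonneg v) with h0 | h0
  · exfalso; apply hv; ext i
    have hs : ∑ j, v j * v j = 0 := by
      unfold dotProduct at h0; exact h0.symm
    have := (Finset.sum_eq_zero_iff_of_nonneg (fun j _ => mul_self_nonneg (v j))).1 hs i
      (Finset.mem_univ i)
    simpa using mul_self_eq_zero.1 this
  · exact h0

lemma herm_transpose {M : Matrix (Fin N) (Fin N) ℝ} (h : M.IsHermitian) : Mᵀ = M := by
  simpa using h.eq

lemma form_expand (A : Matrix (Fin N) (Fin N) ℝ) (x y : Fin N → ℝ) :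
    x ⬝ᵥ (A *ᵥ y) = ∑ i, ∑ j, x i * A i j * y j := by
  simp [dotProduct, Matrix.mulVec, Finset.mul_sum, mul_assoc]

lemma form_symm {M : Matrix (Fin N) (Fin N) ℝ} (h : M.IsHermitian) (v w : Fin N → ℝ) :
    v ⬝ᵥ (M *ᵥ w) = w ⬝ᵥ (M *ᵥ v) := by
  have hM : ∀ i j, M i j = M j i := fun i j => by
    have := congrFun (congrFun (herm_transpose h) j) i
    simpa [Matrix.transpose_apply] using this
  rw [form_expand, form_expand, Finset.sum_comm]
  refine Finset.sum_congr rfl fun j _ => Finset.sum_congr rfl fun i _ => ?_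
  rw [hM i j]; ring

lemma form_nonneg {M : Matrix (Fin N) (Fin N) ℝ} (h : M.PosSemidef) (v : Fin N → ℝ) :
    0 ≤ v ⬝ᵥ (M *ᵥ v) := by
  have := h.dotProduct_mulVec_nonneg v; simpa using this

lemma form_pos {M : Matrix (Fin N) (Fin N) ℝ} (h : M.PosDef) {v : Fin N → ℝ} (hv : v ≠ 0) :
    0 < v ⬝ᵥ (M *ᵥ v) := by
  have := h.dotProduct_mulVec_pos hv; simpa using this

/-- Cauchy–Schwarz for a PSD form -/
lemma form_cs {M : Matrix (Fin N) (Fin N) ℝ} (h : M.PosSemidef) (x y : Fin N → ℝ) :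
    (x ⬝ᵥ (M *ᵥ y)) ^ 2 ≤ (x ⬝ᵥ (M *ᵥ x)) * (y ⬝ᵥ (M *ᵥ y)) := by
  have key : ∀ t : ℝ, 0 ≤ (y ⬝ᵥ (M *ᵥ y)) * (t * t) + (2 * (x ⬝ᵥ (M *ᵥ y))) * t
      + (x ⬝ᵥ (M *ᵥ x)) := by
    intro t
    have h0 : 0 ≤ (x + t • y) ⬝ᵥ (M *ᵥ (x + t • y)) := form_nonneg h _
    have hsym : y ⬝ᵥ (M *ᵥ x) = x ⬝ᵥ (M *ᵥ y) := form_symm h.1 y x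
    rw [Matrix.mulVec_add, Matrix.mulVec_smul] at h0
    simp only [dotProduct_add, add_dotProduct, dotProduct_smul,
      smul_dotProduct, smul_eq_mul, hsym] at h0
    nlinarith [h0]
  have := discrim_le_zero key
  unfold discrim at this
  nlinarith [this]

lemma dot_cs (x y : Fin N → ℝ) : (x ⬝ᵥ y) ^ 2 ≤ (x ⬝ᵥ x) * (y ⬝ᵥ y) := by
  have := form_cs (M := (1 : Matrix (Fin N) (Fin N) ℝ)) Matrix.PosSemidef.one x y
  simpa [Matrix.one_mulVec] using this

lemma pd_isUnit {M : Matrix (Fin N) (Fin N) ℝ} (h : M.PosDef) : IsUnit M.det :=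
  isUnit_iff_ne_zero.2 (ne_of_gt h.det_pos)

lemma pd_mulVec_inv {M : Matrix (Fin N) (Fin N) ℝ} (h : M.PosDef) (v : Fin N → ℝ) :
    M *ᵥ (M⁻¹ *ᵥ v) = v := by
  rw [Matrix.mulVec_mulVec, Matrix.mul_nonsing_inv _ (pd_isUnit h), Matrix.one_mulVec]

/-- `αI ≤ M` implies `M⁻¹ ≤ α⁻¹ I` as forms. -/
lemma inv_form_le {M : Matrix (Fin N) (Fin N) ℝ} (h : M.PosDef) {α : ℝ} (hα : 0 < α)
    (hb : ∀ v, α * (v ⬝ᵥ v) ≤ v ⬝ᵥ (M *ᵥ v)) (v : Fin N → ℝ) :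
    v ⬝ᵥ (M⁻¹ *ᵥ v) ≤ α⁻¹ * (v ⬝ᵥ v) := by
  obtain ⟨u, hu⟩ : ∃ u, M⁻¹ *ᵥ v = u := ⟨_, rfl⟩
  have huv : M *ᵥ u = v := by rw [← hu]; exact pd_mulVec_inv h v
  rw [hu]
  have hQ : v ⬝ᵥ u = u ⬝ᵥ (M *ᵥ u) := by
    conv_lhs => rw [← huv]
    exact dotProduct_comm _ _
  have hQ0 : 0 ≤ v ⬝ᵥ u := by rw [hQ]; exact form_nonneg h.posSemidef u
  have hcs : (u ⬝ᵥ v) ^ 2 ≤ (u ⬝ᵥ u) * (v ⬝ᵥ v) := dot_cs u v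
  have h1 : α * (u ⬝ᵥ u) ≤ v ⬝ᵥ u := by rw [hQ]; exact hb u
  have huv' : u ⬝ᵥ v = v ⬝ᵥ u := dotProduct_comm u v
  rw [huv'] at hcs
  rcases eq_or_lt_of_le hQ0 with h0 | h0
  · rw [← h0]; exact mul_nonneg (by positivity) (dotSelf_nonneg v)
  · have key : α * (v ⬝ᵥ u) ≤ v ⬝ᵥ v := by
      have e1 : α * (v ⬝ᵥ u) ^ 2 ≤ α * ((u ⬝ᵥ u) * (v ⬝ᵥ v)) :=
        mul_le_mul_of_nonneg_left hcs hα.le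
      have e2 : (α * (u ⬝ᵥ u)) * (v ⬝ᵥ v) ≤ (v ⬝ᵥ u) * (v ⬝ᵥ v) :=
        mul_le_mul_of_nonneg_right h1 (dotSelf_nonneg v)
      have e3 : (α * (v ⬝ᵥ u)) * (v ⬝ᵥ u) ≤ (v ⬝ᵥ v) * (v ⬝ᵥ u) := by nlinarith
      exact le_of_mul_le_mul_right e3 h0
    calc v ⬝ᵥ u = α⁻¹ * (α * (v ⬝ᵥ u)) := by field_simp
      _ ≤ α⁻¹ * (v ⬝ᵥ v) := mul_le_mul_of_nonneg_left key (by positivity)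

/-- `M ≤ βI` implies `β⁻¹ I ≤ M⁻¹` as forms. -/
lemma inv_form_ge {M : Matrix (Fin N) (Fin N) ℝ} (h : M.PosDef) {β : ℝ} (hβ : 0 < β)
    (hb : ∀ v, v ⬝ᵥ (M *ᵥ v) ≤ β * (v ⬝ᵥ v)) (v : Fin N → ℝ) :
    β⁻¹ * (v ⬝ᵥ v) ≤ v ⬝ᵥ (M⁻¹ *ᵥ v) := by
  obtain ⟨u, hu⟩ : ∃ u, M⁻¹ *ᵥ v = u := ⟨_, rfl⟩
  have huv : M *ᵥ u = v := by rw [← hu]; exact pd_mulVec_inv h v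
  rw [hu]
  have hG : u ⬝ᵥ (M *ᵥ u) = v ⬝ᵥ u := by rw [huv, dotProduct_comm]
  have hcs : (v ⬝ᵥ (M *ᵥ u)) ^ 2 ≤ (v ⬝ᵥ (M *ᵥ v)) * (u ⬝ᵥ (M *ᵥ u)) := form_cs h.posSemidef v u
  rw [huv, dotProduct_comm u v] at hcs
  have hG0 : 0 ≤ v ⬝ᵥ u := by rw [← hG]; exact form_nonneg h.posSemidef u
  rcases eq_or_lt_of_le (dotSelf_nonneg v) with h0 | h0
  · calc β⁻¹ * (v ⬝ᵥ v) = 0 := by rw [← h0]; ring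
      _ ≤ v ⬝ᵥ u := hG0
  · have h1 : v ⬝ᵥ (M *ᵥ v) ≤ β * (v ⬝ᵥ v) := hb v
    have h2 : (v ⬝ᵥ v) ^ 2 ≤ β * (v ⬝ᵥ v) * (v ⬝ᵥ u) := by
      nlinarith [form_nonneg h.posSemidef v]
    have h3 : (v ⬝ᵥ v) ≤ β * (v ⬝ᵥ u) := by nlinarith
    calc β⁻¹ * (v ⬝ᵥ v) ≤ β⁻¹ * (β * (v ⬝ᵥ u)) :=
          mul_le_mul_of_nonneg_left h3 (by positivity)
      _ = v ⬝ᵥ u := by field_simp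

/-- Loewner form antitonicity of inverse. -/
lemma inv_form_anti {A B : Matrix (Fin N) (Fin N) ℝ} (hA : A.PosDef) (hB : B.PosDef)
    (hb : ∀ v, v ⬝ᵥ (A *ᵥ v) ≤ v ⬝ᵥ (B *ᵥ v)) (v : Fin N → ℝ) :
    v ⬝ᵥ (B⁻¹ *ᵥ v) ≤ v ⬝ᵥ (A⁻¹ *ᵥ v) := by
  obtain ⟨x, hx⟩ : ∃ x, B⁻¹ *ᵥ v = x := ⟨_, rfl⟩
  obtain ⟨y, hy⟩ : ∃ y, A⁻¹ *ᵥ v = y := ⟨_, rfl⟩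
  have hBx : B *ᵥ x = v := by rw [← hx]; exact pd_mulVec_inv hB v
  have hAy : A *ᵥ y = v := by rw [← hy]; exact pd_mulVec_inv hA v
  rw [hx, hy]
  have hT : v ⬝ᵥ x = x ⬝ᵥ (B *ᵥ x) := by rw [hBx, dotProduct_comm]
  have hT2 : v ⬝ᵥ x = x ⬝ᵥ (A *ᵥ y) := by rw [hAy, dotProduct_comm]
  have hG : y ⬝ᵥ (A *ᵥ y) = v ⬝ᵥ y := by rw [hAy, dotProduct_comm]
  have hcs : (x ⬝ᵥ (A *ᵥ y)) ^ 2 ≤ (x ⬝ᵥ (A *ᵥ x)) * (y ⬝ᵥ (A *ᵥ y)) := form_cs hA.posSemidef x y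
  have hT0 : 0 ≤ v ⬝ᵥ x := by rw [hT]; exact form_nonneg hB.posSemidef x
  have hG0 : 0 ≤ v ⬝ᵥ y := by rw [← hG]; exact form_nonneg hA.posSemidef y
  have hxx : x ⬝ᵥ (A *ᵥ x) ≤ v ⬝ᵥ x := by rw [hT]; exact hb x
  have hxA0 : 0 ≤ x ⬝ᵥ (A *ᵥ x) := form_nonneg hA.posSemidef x
  rcases eq_or_lt_of_le hT0 with h0 | h0
  · rw [← h0]; exact hG0
  · have e : (v ⬝ᵥ x) ^ 2 ≤ (v ⬝ᵥ x) * (v ⬝ᵥ y) := by nlinarith [hcs, hT2, hG]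
    nlinarith [e]

/-- `αI ≤ M` implies `‖M⁻¹ v‖ ≤ α⁻¹ ‖v‖`, squared form. -/
lemma inv_vec_sq_le {M : Matrix (Fin N) (Fin N) ℝ} (h : M.PosDef) {α : ℝ} (hα : 0 < α)
    (hb : ∀ v, α * (v ⬝ᵥ v) ≤ v ⬝ᵥ (M *ᵥ v)) (v : Fin N → ℝ) :
    α ^ 2 * ((M⁻¹ *ᵥ v) ⬝ᵥ (M⁻¹ *ᵥ v)) ≤ v ⬝ᵥ v := by
  obtain ⟨u, hu⟩ : ∃ u, M⁻¹ *ᵥ v = u := ⟨_, rfl⟩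
  have huv : M *ᵥ u = v := by rw [← hu]; exact pd_mulVec_inv h v
  rw [hu]
  have h1 : α * (u ⬝ᵥ u) ≤ u ⬝ᵥ v := by
    conv_rhs => rw [← huv]
    calc α * (u ⬝ᵥ u) ≤ u ⬝ᵥ (M *ᵥ u) := hb u
      _ = u ⬝ᵥ (M *ᵥ u) := rfl
  have hcs : (u ⬝ᵥ v) ^ 2 ≤ (u ⬝ᵥ u) * (v ⬝ᵥ v) := dot_cs u v
  have hu0 : 0 ≤ u ⬝ᵥ u := dotSelf_nonneg u
  rcases eq_or_lt_of_le hu0 with h0 | h0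
  · rw [← h0]
    calc α ^ 2 * 0 = 0 := by ring
      _ ≤ v ⬝ᵥ v := dotSelf_nonneg v
  · have h4 : 0 ≤ α * (u ⬝ᵥ u) := mul_nonneg hα.le hu0
    have h5 := mul_self_le_mul_self h4 h1
    nlinarith [h5, hcs, h0]

/-- `R ≤ βI`, `R` PSD symmetric implies `‖R z‖² ≤ β² ‖z‖²`. -/
lemma vec_sq_le {R : Matrix (Fin N) (Fin N) ℝ} (h : R.PosSemidef) {β : ℝ} (hβ : 0 ≤ β)
    (hb : ∀ v, v ⬝ᵥ (R *ᵥ v) ≤ β * (v ⬝ᵥ v)) (z : Fin N → ℝ) :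
    (R *ᵥ z) ⬝ᵥ (R *ᵥ z) ≤ β ^ 2 * (z ⬝ᵥ z) := by
  obtain ⟨y, hy⟩ : ∃ y, R *ᵥ z = y := ⟨_, rfl⟩
  rw [hy]
  have h1 : y ⬝ᵥ y = y ⬝ᵥ (R *ᵥ z) := by rw [hy]
  have hcs : (y ⬝ᵥ (R *ᵥ z)) ^ 2 ≤ (y ⬝ᵥ (R *ᵥ y)) * (z ⬝ᵥ (R *ᵥ z)) := form_cs h y z
  have h2 : y ⬝ᵥ (R *ᵥ y) ≤ β * (y ⬝ᵥ y) := hb y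
  have h3 : z ⬝ᵥ (R *ᵥ z) ≤ β * (z ⬝ᵥ z) := hb z
  have hy0 : 0 ≤ y ⬝ᵥ y := dotSelf_nonneg y
  have hz0 : 0 ≤ z ⬝ᵥ z := dotSelf_nonneg z
  have hRy0 : 0 ≤ y ⬝ᵥ (R *ᵥ y) := form_nonneg h y
  have hRz0 : 0 ≤ z ⬝ᵥ (R *ᵥ z) := form_nonneg h z
  rcases eq_or_lt_of_le hy0 with h0 | h0
  · rw [← h0]; positivity
  · nlinarith

lemma smul_one_form (a : ℝ) (v : Fin N → ℝ) :
    v ⬝ᵥ ((a • (1 : Matrix (Fin N) (Fin N) ℝ)) *ᵥ v) = a * (v ⬝ᵥ v) := by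
  rw [Matrix.smul_mulVec, Matrix.one_mulVec, dotProduct_smul]; rfl

lemma lt_form_ge {M : Matrix (Fin N) (Fin N) ℝ} {a : ℝ}
    (h : (M - a • (1 : Matrix (Fin N) (Fin N) ℝ)).PosDef) (v : Fin N → ℝ) :
    a * (v ⬝ᵥ v) ≤ v ⬝ᵥ (M *ᵥ v) := by
  by_cases hv : v = 0
  · subst hv; simp
  · have := form_pos h hv
    rw [Matrix.sub_mulVec, dotProduct_sub, smul_one_form] at this
    linarith

lemma lt_form_le {M : Matrix (Fin N) (Fin N) ℝ} {b : ℝ}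
    (h : ((b • (1 : Matrix (Fin N) (Fin N) ℝ)) - M).PosDef) (v : Fin N → ℝ) :
    v ⬝ᵥ (M *ᵥ v) ≤ b * (v ⬝ᵥ v) := by
  by_cases hv : v = 0
  · subst hv; simp
  · have := form_pos h hv
    rw [Matrix.sub_mulVec, dotProduct_sub, smul_one_form] at this
    linarith

lemma herm_smul_one (a : ℝ) : (a • (1 : Matrix (Fin N) (Fin N) ℝ)).IsHermitian := by
  unfold Matrix.IsHermitian
  ext i j
  by_cases hij : i = j
  · subst hij; simp [Matrix.conjTranspose_apply, Matrix.one_apply]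
  · simp [Matrix.conjTranspose_apply, Matrix.one_apply, hij, Ne.symm hij]

lemma herm_of_lt {M : Matrix (Fin N) (Fin N) ℝ} {a : ℝ}
    (h : (M - a • (1 : Matrix (Fin N) (Fin N) ℝ)).PosDef) : M.IsHermitian := by
  have h2 : M = (M - a • (1 : Matrix (Fin N) (Fin N) ℝ)) + a • (1 : Matrix (Fin N) (Fin N) ℝ) :=
    (sub_add_cancel _ _).symm
  rw [h2]
  exact h.1.add (herm_smul_one a)

lemma pd_of_lt {M : Matrix (Fin N) (Fin N) ℝ} {a : ℝ} (ha : 0 < a)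
    (h : (M - a • (1 : Matrix (Fin N) (Fin N) ℝ)).PosDef) : M.PosDef := by
  refine Matrix.PosDef.of_dotProduct_mulVec_pos (herm_of_lt h) fun v hv => ?_
  have h2 := lt_form_ge h v
  have h3 : 0 < v ⬝ᵥ v := dotSelf_pos hv
  have : 0 < v ⬝ᵥ (M *ᵥ v) := lt_of_lt_of_le (by positivity) h2
  simpa using this

section Kalman

variable {q1 q2 r1 r2 : ℝ}

/-- one step of the Kalman error recursion -/
lemma kalman_step (hq0 : 0 < q1) (hr0 : 0 < r1) (hr2 : 0 < r2)
    (Γpost P R K Γpost' : Matrix (Fin 2) (Fin 2) ℝ)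
    (hpostPD : Γpost.PosDef)
    (hQlo : ∀ v, q1 * (v ⬝ᵥ v) ≤ v ⬝ᵥ ((P - Γpost) *ᵥ v))
    (hQpd : (P - Γpost).PosDef)
    (hRpd : R.PosDef)
    (hRlo : ∀ v, r1 * (v ⬝ᵥ v) ≤ v ⬝ᵥ (R *ᵥ v))
    (hRhi : ∀ v, v ⬝ᵥ (R *ᵥ v) ≤ r2 * (v ⬝ᵥ v))
    (hK : K = P * (P + R)⁻¹)
    (hpost' : Γpost' = P - K * P)
    (η η' : Fin 2 → ℝ) (hη : η' = (1 - K) *ᵥ η) :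
    Γpost'.PosDef ∧
    (∀ v, v ⬝ᵥ (Γpost' *ᵥ v) ≤ r2 * (v ⬝ᵥ v)) ∧
    (∀ v, (q1⁻¹ + r1⁻¹)⁻¹ * (v ⬝ᵥ v) ≤ v ⬝ᵥ (Γpost' *ᵥ v)) ∧
    (η' ⬝ᵥ (Γpost'⁻¹ *ᵥ η') ≤ η ⬝ᵥ (Γpost⁻¹ *ᵥ η)) ∧
    (η' ⬝ᵥ η' ≤ (r2 / q1) ^ 2 * (η ⬝ᵥ η)) ∧
    (∀ β, 0 < β → (∀ v, v ⬝ᵥ (P *ᵥ v) ≤ β * (v ⬝ᵥ v)) →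
      ∀ v, v ⬝ᵥ (Γpost' *ᵥ v) ≤ (β⁻¹ + r2⁻¹)⁻¹ * (v ⬝ᵥ v)) := by
  have hPeq : P = Γpost + (P - Γpost) := by abel
  have hPpd : P.PosDef := by rw [hPeq]; exact hpostPD.add hQpd
  have hPlo : ∀ v, q1 * (v ⬝ᵥ v) ≤ v ⬝ᵥ (P *ᵥ v) := by
    intro v
    have h2 : v ⬝ᵥ ((P - Γpost) *ᵥ v) = v ⬝ᵥ (P *ᵥ v) - v ⬝ᵥ (Γpost *ᵥ v) := by
      rw [Matrix.sub_mulVec, dotProduct_sub]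
    linarith [hQlo v, form_nonneg hpostPD.posSemidef v, h2]
  set S := P + R with hSdef
  have hSpd : S.PosDef := hPpd.add hRpd
  have hSform : ∀ v, v ⬝ᵥ (S *ᵥ v) = v ⬝ᵥ (P *ᵥ v) + v ⬝ᵥ (R *ᵥ v) := by
    intro v; rw [hSdef, Matrix.add_mulVec, dotProduct_add]
  have hSlo : ∀ v, q1 * (v ⬝ᵥ v) ≤ v ⬝ᵥ (S *ᵥ v) := by
    intro v
    linarith [hPlo v, form_nonneg hRpd.posSemidef v, hSform v]
  have uP := pd_isUnit hPpd
  have uR := pd_isUnit hRpd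
  have uS := pd_isUnit hSpd
  have eP : P⁻¹ * P = 1 := Matrix.nonsing_inv_mul _ uP
  have eR : R⁻¹ * R = 1 := Matrix.nonsing_inv_mul _ uR
  have eR' : R * R⁻¹ = 1 := Matrix.mul_nonsing_inv _ uR
  have eS' : S * S⁻¹ = 1 := Matrix.mul_nonsing_inv _ uS
  have hIK : 1 - K = R * S⁻¹ := by
    rw [hK]
    calc (1 : Matrix (Fin 2) (Fin 2) ℝ) - P * S⁻¹ = S * S⁻¹ - P * S⁻¹ := by rw [eS']
      _ = (S - P) * S⁻¹ := by rw [Matrix.sub_mul]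
      _ = R * S⁻¹ := by rw [hSdef]; congr 1; abel
  have hpostEq : Γpost' = R * S⁻¹ * P := by
    rw [hpost', hK]
    calc P - P * S⁻¹ * P = (1 - P * S⁻¹) * P := by
          rw [Matrix.sub_mul, Matrix.one_mul]
      _ = R * S⁻¹ * P := by rw [← hK, hIK]
  have hmul : (P⁻¹ + R⁻¹) * (R * S⁻¹ * P) = 1 := by
    have hsum : P⁻¹ + R⁻¹ = P⁻¹ * S * R⁻¹ := by
      rw [hSdef, Matrix.mul_add, eP, Matrix.add_mul, Matrix.one_mul, Matrix.mul_assoc, eR',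
        Matrix.mul_one, add_comm]
    rw [hsum]
    calc P⁻¹ * S * R⁻¹ * (R * S⁻¹ * P) = P⁻¹ * (S * (R⁻¹ * (R * (S⁻¹ * P)))) := by
          simp only [Matrix.mul_assoc]
      _ = P⁻¹ * (S * (S⁻¹ * P)) := by rw [← Matrix.mul_assoc R⁻¹ R, eR, Matrix.one_mul]
      _ = P⁻¹ * P := by rw [← Matrix.mul_assoc S S⁻¹, eS', Matrix.one_mul]
      _ = 1 := eP
  have hsumPD : (P⁻¹ + R⁻¹).PosDef := hPpd.inv.add hRpd.inv
  have hpostEq2 : Γpost' = (P⁻¹ + R⁻¹)⁻¹ := by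
    rw [hpostEq, Matrix.inv_eq_right_inv hmul]
  have hpost'PD : Γpost'.PosDef := by rw [hpostEq2]; exact hsumPD.inv
  have hinvEq : Γpost'⁻¹ = P⁻¹ + R⁻¹ := by
    rw [hpostEq2, Matrix.nonsing_inv_nonsing_inv _ (pd_isUnit hsumPD)]
  have hsumform : ∀ v, v ⬝ᵥ ((P⁻¹ + R⁻¹) *ᵥ v) = v ⬝ᵥ (P⁻¹ *ᵥ v) + v ⬝ᵥ (R⁻¹ *ᵥ v) := by
    intro v; rw [Matrix.add_mulVec, dotProduct_add]
  -- upper bound by r2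
  have hhiR : ∀ v, v ⬝ᵥ (Γpost' *ᵥ v) ≤ r2 * (v ⬝ᵥ v) := by
    intro v
    have hRinv_le_sum : ∀ w, w ⬝ᵥ (R⁻¹ *ᵥ w) ≤ w ⬝ᵥ ((P⁻¹ + R⁻¹) *ᵥ w) := by
      intro w
      linarith [form_nonneg hPpd.inv.posSemidef w, hsumform w]
    have h1 := inv_form_anti hRpd.inv hsumPD hRinv_le_sum v
    rw [Matrix.nonsing_inv_nonsing_inv _ uR] at h1
    rw [hpostEq2]
    exact le_trans h1 (hRhi v)
  -- lower bound
  have hlo : ∀ v, (q1⁻¹ + r1⁻¹)⁻¹ * (v ⬝ᵥ v) ≤ v ⬝ᵥ (Γpost' *ᵥ v) := by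
    intro v
    have hβ : (0:ℝ) < q1⁻¹ + r1⁻¹ := by positivity
    have hsum_hi : ∀ w, w ⬝ᵥ ((P⁻¹ + R⁻¹) *ᵥ w) ≤ (q1⁻¹ + r1⁻¹) * (w ⬝ᵥ w) := by
      intro w
      linarith [inv_form_le hPpd hq0 hPlo w, inv_form_le hRpd hr0 hRlo w, hsumform w]
    rw [hpostEq2]
    exact inv_form_ge hsumPD hβ hsum_hi v
  -- Lyapunov decrease
  obtain ⟨z, hz⟩ : ∃ z, S⁻¹ *ᵥ η = z := ⟨_, rfl⟩
  have hSz : S *ᵥ z = η := by rw [← hz]; exact pd_mulVec_inv hSpd η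
  have hη' : η' = R *ᵥ z := by rw [hη, hIK, ← Matrix.mulVec_mulVec, hz]
  have hlyap : η' ⬝ᵥ (Γpost'⁻¹ *ᵥ η') ≤ η ⬝ᵥ (Γpost⁻¹ *ᵥ η) := by
    obtain ⟨y, hy⟩ : ∃ y, R *ᵥ z = y := ⟨_, rfl⟩
    rw [hη', hy, hinvEq]
    have hPz : P⁻¹ *ᵥ (P *ᵥ z) = z := by
      rw [Matrix.mulVec_mulVec, eP, Matrix.one_mulVec]
    have hRy : R⁻¹ *ᵥ y = z := by
      rw [← hy, Matrix.mulVec_mulVec, eR, Matrix.one_mulVec]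
    have hV' : y ⬝ᵥ ((P⁻¹ + R⁻¹) *ᵥ y) = y ⬝ᵥ (P⁻¹ *ᵥ y) + y ⬝ᵥ z := by
      rw [hsumform y, hRy]
    have hη_split : η = P *ᵥ z + y := by
      rw [← hSz, hSdef, Matrix.add_mulVec, hy]
    have hPinvη : P⁻¹ *ᵥ η = z + P⁻¹ *ᵥ y := by
      rw [hη_split, Matrix.mulVec_add, hPz]
    have hcross : (P *ᵥ z) ⬝ᵥ (P⁻¹ *ᵥ y) = z ⬝ᵥ y := by
      rw [dotProduct_comm]
      calc (P⁻¹ *ᵥ y) ⬝ᵥ (P *ᵥ z) = z ⬝ᵥ (P *ᵥ (P⁻¹ *ᵥ y)) := form_symm hPpd.1 _ _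
        _ = z ⬝ᵥ y := by rw [pd_mulVec_inv hPpd]
    have hexpand : η ⬝ᵥ (P⁻¹ *ᵥ η) =
        z ⬝ᵥ (P *ᵥ z) + z ⬝ᵥ y + y ⬝ᵥ z + y ⬝ᵥ (P⁻¹ *ᵥ y) := by
      rw [hPinvη]
      conv_lhs => rw [hη_split]
      rw [add_dotProduct, dotProduct_add, dotProduct_add, hcross,
        dotProduct_comm (P *ᵥ z) z]
      ring
    have hzy : 0 ≤ z ⬝ᵥ y := by
      rw [← hy]; exact form_nonneg hRpd.posSemidef z
    have hyz : y ⬝ᵥ z = z ⬝ᵥ y := dotProduct_comm y z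
    have hzPz : 0 ≤ z ⬝ᵥ (P *ᵥ z) := form_nonneg hPpd.posSemidef z
    have hmid : y ⬝ᵥ ((P⁻¹ + R⁻¹) *ᵥ y) ≤ η ⬝ᵥ (P⁻¹ *ᵥ η) := by
      rw [hV', hexpand]; linarith
    have hanti : η ⬝ᵥ (P⁻¹ *ᵥ η) ≤ η ⬝ᵥ (Γpost⁻¹ *ᵥ η) := by
      apply inv_form_anti hpostPD hPpd
      intro w
      have h2 : w ⬝ᵥ ((P - Γpost) *ᵥ w) = w ⬝ᵥ (P *ᵥ w) - w ⬝ᵥ (Γpost *ᵥ w) := by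
        rw [Matrix.sub_mulVec, dotProduct_sub]
      have h3 := form_nonneg hQpd.posSemidef w
      linarith
    exact le_trans hmid hanti
  -- norm contraction by one step
  have hnorm : η' ⬝ᵥ η' ≤ (r2 / q1) ^ 2 * (η ⬝ᵥ η) := by
    have e1 : (R *ᵥ z) ⬝ᵥ (R *ᵥ z) ≤ r2 ^ 2 * (z ⬝ᵥ z) :=
      vec_sq_le hRpd.posSemidef hr2.le hRhi z
    have e2 : q1 ^ 2 * (z ⬝ᵥ z) ≤ η ⬝ᵥ η := by
      have := inv_vec_sq_le hSpd hq0 hSlo η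
      rw [hz] at this
      exact this
    have e3 : (r2 / q1) ^ 2 * (q1 ^ 2 * (z ⬝ᵥ z)) ≤ (r2 / q1) ^ 2 * (η ⬝ᵥ η) :=
      mul_le_mul_of_nonneg_left e2 (sq_nonneg _)
    have e4 : (r2 / q1) ^ 2 * (q1 ^ 2 * (z ⬝ᵥ z)) = r2 ^ 2 * (z ⬝ᵥ z) := by
      have hq1 : q1 ≠ 0 := ne_of_gt hq0
      field_simp
    rw [hη']
    calc (R *ᵥ z) ⬝ᵥ (R *ᵥ z) ≤ r2 ^ 2 * (z ⬝ᵥ z) := e1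
      _ = (r2 / q1) ^ 2 * (q1 ^ 2 * (z ⬝ᵥ z)) := e4.symm
      _ ≤ (r2 / q1) ^ 2 * (η ⬝ᵥ η) := e3
  -- conditional improved upper bound
  have hcond : ∀ β, 0 < β → (∀ v, v ⬝ᵥ (P *ᵥ v) ≤ β * (v ⬝ᵥ v)) →
      ∀ v, v ⬝ᵥ (Γpost' *ᵥ v) ≤ (β⁻¹ + r2⁻¹)⁻¹ * (v ⬝ᵥ v) := by
    intro β hβ hPhi v
    have hα : (0:ℝ) < β⁻¹ + r2⁻¹ := by positivity
    have hsum_lo : ∀ w, (β⁻¹ + r2⁻¹) * (w ⬝ᵥ w) ≤ w ⬝ᵥ ((P⁻¹ + R⁻¹) *ᵥ w) := by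
      intro w
      linarith [inv_form_ge hPpd hβ hPhi w, inv_form_ge hRpd hr2 hRhi w, hsumform w]
    rw [hpostEq2]
    exact inv_form_le hsumPD hα hsum_lo v
  exact ⟨hpost'PD, hhiR, hlo, hlyap, hnorm, hcond⟩

end Kalman

lemma kalman_key {q1 q2 r1 r2 : ℝ} (hq0 : 0 < q1) (hq : q1 < q2) (hr0 : 0 < r1) (hr : r1 < r2)
    (kl : ℕ) (kbar : ℕ∞)
    (Γcpost Γcprior Kc Qc Rc : ℕ → Matrix (Fin 2) (Fin 2) ℝ)
    (hQc : ∀ k, kl ≤ k → (k : ℕ∞) < kbar →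
      loewnerLT (q1 • 1) (Qc k) ∧ loewnerLT (Qc k) (q2 • 1))
    (hRc : ∀ k, kl < k → (k : ℕ∞) ≤ kbar →
      loewnerLT (r1 • 1) (Rc k) ∧ loewnerLT (Rc k) (r2 • 1))
    (hΓc0 : (Γcpost kl).PosDef)
    (hcprior : ∀ k, kl ≤ k → (k : ℕ∞) < kbar → Γcprior (k + 1) = Γcpost k + Qc k)
    (hKc : ∀ k, kl ≤ k → (k : ℕ∞) < kbar →
      Kc (k + 1) = Γcprior (k + 1) * (Γcprior (k + 1) + Rc (k + 1))⁻¹)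
    (hcpost : ∀ k, kl ≤ k → (k : ℕ∞) < kbar →
      Γcpost (k + 1) = Γcprior (k + 1) - Kc (k + 1) * Γcprior (k + 1))
    (η : ℕ → Fin 2 → ℝ)
    (hrec : ∀ k, kl ≤ k → (k : ℕ∞) < kbar → η (k + 1) = (1 - Kc (k + 1)) *ᵥ η k) :
    ∀ k, kl < k → (k : ℕ∞) ≤ kbar →
      η k ⬝ᵥ η k ≤ (cZero q1 q2 r1 r2) ^ 2 * (η kl ⬝ᵥ η kl) := by
  have hr2 : 0 < r2 := lt_trans hr0 hr
  have hq2 : 0 < q2 := lt_trans hq0 hq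
  set ca := min (2 * r2⁻¹) q1 with hca_def
  set cb := max (2 * r1⁻¹) q2 with hcb_def
  have hca : 0 < ca := lt_min (by positivity) hq0
  have hcb : 0 < cb := lt_of_lt_of_le (by positivity) (le_max_left (2 * r1⁻¹) q2)
  have h1ab : 0 < 1 + ca * cb := by positivity
  set c2 := (1 + ca * cb) / ca with hc2_def
  set c1 := ca / (1 + ca * cb) with hc1_def
  have hc2 : 0 < c2 := by positivity
  have hc1 : 0 < c1 := by positivity
  have hc1c2 : c1⁻¹ = c2 := by rw [hc1_def, hc2_def, inv_div]
  have c2_ge_one : 1 ≤ c2 := by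
    rw [hc2_def, le_div_iff₀ hca, one_mul]
    rcases le_or_gt 1 cb with h | h
    · nlinarith
    · have h2 : 2 * r1⁻¹ ≤ cb := le_max_left _ _
      have h3 : 2 * r1⁻¹ < 1 := lt_of_le_of_lt h2 h
      have h4 : 2 < r1 := by
        rw [show (2:ℝ) * r1⁻¹ = 2 / r1 by ring, div_lt_one hr0] at h3
        exact h3
      have h5 : 2 * r2⁻¹ < 1 := by
        rw [show (2:ℝ) * r2⁻¹ = 2 / r2 by ring, div_lt_one hr2]
        linarith
      have h6 : ca ≤ 2 * r2⁻¹ := min_le_left _ _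
      nlinarith
  have hc2eq : c2 = ca⁻¹ + cb := by
    rw [hc2_def]; field_simp
  have c2_lb1 : q1⁻¹ + r1⁻¹ ≤ c2 := by
    rw [hc2eq]
    have h1 : q1⁻¹ ≤ ca⁻¹ := by
      apply inv_anti₀ hca (min_le_right _ _)
    have h2 : r1⁻¹ ≤ cb := by
      have : r1⁻¹ ≤ 2 * r1⁻¹ := by nlinarith [inv_pos.2 hr0]
      exact le_trans this (le_max_left _ _)
    linarith
  have c2_lb2 : (r2 + q2) / 2 ≤ c2 := by
    rw [hc2eq]
    have h1 : r2 / 2 ≤ ca⁻¹ := by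
      have h2 : ca ≤ 2 * r2⁻¹ := min_le_left _ _
      have h3 : (2 * r2⁻¹)⁻¹ ≤ ca⁻¹ := inv_anti₀ hca h2
      have h4 : (2 * r2⁻¹)⁻¹ = r2 / 2 := by field_simp
      linarith [h4 ▸ h3]
    have h2 : q2 ≤ cb := le_max_right _ _
    linarith
  have c1_le : c1 ≤ (q1⁻¹ + r1⁻¹)⁻¹ := by
    have hpos : (0:ℝ) < q1⁻¹ + r1⁻¹ := by positivity
    have : c1 = c2⁻¹ := by rw [← hc1c2, inv_inv]
    rw [this]
    exact inv_anti₀ hpos c2_lb1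
  have two_step : ((r2 + q2)⁻¹ + r2⁻¹)⁻¹ ≤ c2 := by
    have hrq : (0:ℝ) < r2 + q2 := by positivity
    have h1 : (r2 + q2)⁻¹ ≤ r2⁻¹ := inv_anti₀ hr2 (by linarith)
    have h2 : 2 * (r2 + q2)⁻¹ ≤ (r2 + q2)⁻¹ + r2⁻¹ := by linarith
    have h3 : ((r2 + q2)⁻¹ + r2⁻¹)⁻¹ ≤ (2 * (r2 + q2)⁻¹)⁻¹ :=
      inv_anti₀ (by positivity) h2
    have h4 : (2 * (r2 + q2)⁻¹)⁻¹ = (r2 + q2) / 2 := by field_simp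
    calc ((r2 + q2)⁻¹ + r2⁻¹)⁻¹ ≤ (2 * (r2 + q2)⁻¹)⁻¹ := h3
      _ = (r2 + q2) / 2 := h4
      _ ≤ c2 := c2_lb2
  set c0 := cZero q1 q2 r1 r2 with hc0_def
  have hc0 : c2 * (r2 / q1) ≤ c0 := by
    have hcz : c0 = max 1 (Real.sqrt ((((1:ℝ) + ca * cb) / ca) / (ca / (1 + ca * cb))) * r2 * q1⁻¹) := rfl
    rw [hcz]
    have hsq : Real.sqrt (((1 + ca * cb) / ca) / (ca / (1 + ca * cb))) = c2 := by
      have he : ((1 + ca * cb) / ca) / (ca / (1 + ca * cb)) = c2 ^ 2 := by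
        rw [hc2_def]; field_simp
      rw [he, Real.sqrt_sq hc2.le]
    rw [hsq]
    have : c2 * (r2 / q1) = c2 * r2 * q1⁻¹ := by ring
    rw [this]
    exact le_max_right _ _
  have hc0_1 : 1 ≤ c0 := le_max_left _ _
  -- main induction
  have main : ∀ k, kl ≤ k → ((k : ℕ∞) ≤ kbar → (Γcpost k).PosDef ∧
      (kl < k → (∀ v, v ⬝ᵥ (Γcpost k *ᵥ v) ≤ r2 * (v ⬝ᵥ v)) ∧
        (∀ v, c1 * (v ⬝ᵥ v) ≤ v ⬝ᵥ (Γcpost k *ᵥ v)) ∧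
        (η k ⬝ᵥ ((Γcpost k)⁻¹ *ᵥ η k) ≤
          η (kl+1) ⬝ᵥ ((Γcpost (kl+1))⁻¹ *ᵥ η (kl+1)))) ∧
      (kl + 1 < k → ∀ v, v ⬝ᵥ (Γcpost k *ᵥ v) ≤ c2 * (v ⬝ᵥ v))) := by
    intro k hk
    induction k, hk using Nat.le_induction with
    | base =>
      intro _
      exact ⟨hΓc0, fun h => absurd h (lt_irrefl _), fun h => absurd h (by omega)⟩
    | succ k hk IH =>
      intro hk1bar
      have hkcast : (k : ℕ∞) < ((k+1 : ℕ) : ℕ∞) := by exact_mod_cast Nat.lt_succ_self k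
      have hkbar : (k : ℕ∞) < kbar := lt_of_lt_of_le hkcast hk1bar
      obtain ⟨hPD, hBd1, hBd2⟩ := IH hkbar.le
      obtain ⟨hQlo', hQhi'⟩ := hQc k hk hkbar
      obtain ⟨hRlo', hRhi'⟩ := hRc (k+1) (by omega) hk1bar
      have hQlo'' : (Qc k - q1 • 1).PosDef := hQlo'
      have hRlo'' : (Rc (k+1) - r1 • 1).PosDef := hRlo'
      have hRhi'' : (r2 • 1 - Rc (k+1)).PosDef := hRhi'
      have eP : Γcprior (k+1) - Γcpost k = Qc k := by
        rw [hcprior k hk hkbar]; abel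
      have step := kalman_step hq0 hr0 hr2 (Γcpost k) (Γcprior (k+1)) (Rc (k+1)) (Kc (k+1))
        (Γcpost (k+1)) hPD
        (fun v => by rw [eP]; exact lt_form_ge hQlo'' v)
        (by rw [eP]; exact pd_of_lt hq0 hQlo'')
        (pd_of_lt hr0 hRlo'')
        (fun v => lt_form_ge hRlo'' v)
        (fun v => lt_form_le hRhi'' v)
        (hKc k hk hkbar) (hcpost k hk hkbar) (η k) (η (k+1)) (hrec k hk hkbar)
      obtain ⟨sPD, sHiR, sLo, sLyap, sNorm, sCond⟩ := step
      refine ⟨sPD, fun _ => ⟨sHiR, ?_, ?_⟩, ?_⟩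
      · intro v
        exact le_trans (mul_le_mul_of_nonneg_right c1_le (dotSelf_nonneg v)) (sLo v)
      · rcases eq_or_lt_of_le hk with heq | hlt
        · subst heq; exact le_rfl
        · exact le_trans sLyap (hBd1 hlt).2.2
      · intro h1 v
        have hklk : kl < k := by omega
        have hr2bd := (hBd1 hklk).1
        have hQhi''' : (q2 • 1 - Qc k).PosDef := hQhi'
        have hPhi : ∀ w, w ⬝ᵥ (Γcprior (k+1) *ᵥ w) ≤ (r2 + q2) * (w ⬝ᵥ w) := by
          intro w
          have e1 : w ⬝ᵥ (Γcprior (k+1) *ᵥ w) =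
              w ⬝ᵥ (Γcpost k *ᵥ w) + w ⬝ᵥ (Qc k *ᵥ w) := by
            rw [hcprior k hk hkbar, Matrix.add_mulVec, dotProduct_add]
          have e2 := lt_form_le hQhi''' w
          linarith [hr2bd w]
        have := sCond (r2 + q2) (by positivity) hPhi v
        calc v ⬝ᵥ (Γcpost (k+1) *ᵥ v) ≤ ((r2 + q2)⁻¹ + r2⁻¹)⁻¹ * (v ⬝ᵥ v) := this
          _ ≤ c2 * (v ⬝ᵥ v) := mul_le_mul_of_nonneg_right two_step (dotSelf_nonneg v)
  -- one-step norm contraction from kl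
  intro k hklk hkbar
  have hklbar : (kl : ℕ∞) < kbar :=
    lt_of_lt_of_le (by exact_mod_cast hklk) hkbar
  have one_step : η (kl+1) ⬝ᵥ η (kl+1) ≤ (r2 / q1) ^ 2 * (η kl ⬝ᵥ η kl) := by
    have hklbar1 : ((kl + 1 : ℕ) : ℕ∞) ≤ kbar := by
      have : ((kl + 1 : ℕ) : ℕ∞) ≤ (k : ℕ∞) := by exact_mod_cast hklk
      exact le_trans this hkbar
    obtain ⟨hQlo', hQhi'⟩ := hQc kl le_rfl hklbar
    obtain ⟨hRlo', hRhi'⟩ := hRc (kl+1) (by omega) hklbar1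
    have hQlo'' : (Qc kl - q1 • 1).PosDef := hQlo'
    have hRlo'' : (Rc (kl+1) - r1 • 1).PosDef := hRlo'
    have hRhi'' : (r2 • 1 - Rc (kl+1)).PosDef := hRhi'
    have eP : Γcprior (kl+1) - Γcpost kl = Qc kl := by
      rw [hcprior kl le_rfl hklbar]; abel
    have step := kalman_step hq0 hr0 hr2 (Γcpost kl) (Γcprior (kl+1)) (Rc (kl+1)) (Kc (kl+1))
      (Γcpost (kl+1)) hΓc0
      (fun v => by rw [eP]; exact lt_form_ge hQlo'' v)
      (by rw [eP]; exact pd_of_lt hq0 hQlo'')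
      (pd_of_lt hr0 hRlo'')
      (fun v => lt_form_ge hRlo'' v)
      (fun v => lt_form_le hRhi'' v)
      (hKc kl le_rfl hklbar) (hcpost kl le_rfl hklbar) (η kl) (η (kl+1))
      (hrec kl le_rfl hklbar)
    exact step.2.2.2.2.1
  have hB0 : 0 ≤ η kl ⬝ᵥ η kl := dotSelf_nonneg _
  have hrq : (0:ℝ) ≤ r2 / q1 := by positivity
  rcases eq_or_lt_of_le (Nat.succ_le_of_lt hklk) with heq | hlt
  · -- k = kl + 1
    rw [← heq]
    have h1 : r2 / q1 ≤ c0 := by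
      calc r2 / q1 = 1 * (r2 / q1) := by ring
        _ ≤ c2 * (r2 / q1) := mul_le_mul_of_nonneg_right c2_ge_one hrq
        _ ≤ c0 := hc0
    calc η (kl+1) ⬝ᵥ η (kl+1) ≤ (r2 / q1) ^ 2 * (η kl ⬝ᵥ η kl) := one_step
      _ ≤ c0 ^ 2 * (η kl ⬝ᵥ η kl) :=
        mul_le_mul_of_nonneg_right (pow_le_pow_left₀ hrq h1 2) hB0
  · -- kl + 1 < k
    obtain ⟨kPD, kBd1, kBd2⟩ := main k (by omega) hkbar
    have Bd1 := kBd1 hklk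
    have c2bd := kBd2 hlt
    have hkl1bar : ((kl + 1 : ℕ) : ℕ∞) ≤ kbar := by
      have : ((kl + 1 : ℕ) : ℕ∞) ≤ (k : ℕ∞) := by exact_mod_cast (le_of_lt hlt)
      exact le_trans this hkbar
    obtain ⟨PD1, Bd11, _⟩ := main (kl+1) (by omega) hkl1bar
    have lo1 := (Bd11 (by omega)).2.1
    have hB1 : 0 ≤ η (kl+1) ⬝ᵥ η (kl+1) := dotSelf_nonneg _
    have s1 : η k ⬝ᵥ η k ≤ c2 * (η k ⬝ᵥ ((Γcpost k)⁻¹ *ᵥ η k)) := by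
      have h := inv_form_ge kPD hc2 c2bd (η k)
      have h2 := mul_le_mul_of_nonneg_left h hc2.le
      calc η k ⬝ᵥ η k = c2 * (c2⁻¹ * (η k ⬝ᵥ η k)) := by field_simp
        _ ≤ c2 * (η k ⬝ᵥ ((Γcpost k)⁻¹ *ᵥ η k)) := h2
    have s3 : η (kl+1) ⬝ᵥ ((Γcpost (kl+1))⁻¹ *ᵥ η (kl+1)) ≤
        c1⁻¹ * (η (kl+1) ⬝ᵥ η (kl+1)) := inv_form_le PD1 hc1 lo1 _
    calc η k ⬝ᵥ η k ≤ c2 * (η k ⬝ᵥ ((Γcpost k)⁻¹ *ᵥ η k)) := s1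
      _ ≤ c2 * (η (kl+1) ⬝ᵥ ((Γcpost (kl+1))⁻¹ *ᵥ η (kl+1))) :=
          mul_le_mul_of_nonneg_left Bd1.2.2 hc2.le
      _ ≤ c2 * (c1⁻¹ * (η (kl+1) ⬝ᵥ η (kl+1))) := mul_le_mul_of_nonneg_left s3 hc2.le
      _ = c2 ^ 2 * (η (kl+1) ⬝ᵥ η (kl+1)) := by rw [hc1c2]; ring
      _ ≤ c2 ^ 2 * ((r2 / q1) ^ 2 * (η kl ⬝ᵥ η kl)) :=
          mul_le_mul_of_nonneg_left one_step (by positivity)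
      _ = (c2 * (r2 / q1)) ^ 2 * (η kl ⬝ᵥ η kl) := by ring
      _ ≤ c0 ^ 2 * (η kl ⬝ᵥ η kl) :=
          mul_le_mul_of_nonneg_right (pow_le_pow_left₀ (by positivity) hc0 2) hB0

lemma interior_step {vm w ϱm ϱc qm lam θ corr a b c Dl El : ℝ}
    (hvm : 0 < vm) (hw : 0 < w) (hϱc : 0 < ϱc) (hϱ : ϱc < ϱm) (hqm : qm = vm * ϱc)
    (hlam : 0 ≤ lam) (hlvm : lam * vm < 1) (hlw : lam * w < 1)
    (hθ : 0 ≤ θ)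
    (hcorr : |corr| ≤ lam * min vm w * θ)
    (ha : -(Dl - θ) ≤ a) (hb1 : -Dl < b) (hb2 : b < ϱm + El) (hc : c ≤ ϱm + (El - θ))
    (hDl : θ ≤ Dl) (hEl : θ ≤ El) :
    -Dl < b + lam * (gflux vm w ϱm qm a b - gflux vm w ϱm qm b c) + corr ∧
    b + lam * (gflux vm w ϱm qm a b - gflux vm w ϱm qm b c) + corr < ϱm + El := by
  unfold gflux
  have hmv : min vm w ≤ vm := min_le_left _ _
  have hmw : min vm w ≤ w := min_le_right _ _
  have hm0 : 0 < min vm w := lt_min hvm hw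
  obtain ⟨hcor1, hcor2⟩ := abs_le.1 hcorr
  have hprodv : lam * min vm w * θ ≤ lam * vm * θ := by
    have := mul_le_mul_of_nonneg_left hmv hlam
    exact mul_le_mul_of_nonneg_right this hθ
  have hprodw : lam * min vm w * θ ≤ lam * w * θ := by
    have := mul_le_mul_of_nonneg_left hmw hlam
    exact mul_le_mul_of_nonneg_right this hθ
  have hcorw : corr ≤ lam * w * θ := le_trans hcor2 hprodw
  have hcorv : -(lam * vm * θ) ≤ corr := le_trans (by linarith) hcor1
  have hlmin1 : lam * min vm w ≤ 1 :=
    le_trans (mul_le_mul_of_nonneg_left hmv hlam) hlvm.le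
  have hminθ : lam * min vm w * θ ≤ θ := by
    calc lam * min vm w * θ ≤ 1 * θ := mul_le_mul_of_nonneg_right hlmin1 hθ
      _ = θ := one_mul θ
  have hcorθ : corr ≤ θ := le_trans hcor2 hminθ
  have hcorθ' : -θ ≤ corr := le_trans (by linarith) hcor1
  have hqm0 : 0 < qm := by rw [hqm]; positivity
  have hlqm : lam * qm ≤ ϱc := by
    rw [hqm]
    calc lam * (vm * ϱc) = (lam * vm) * ϱc := by ring
      _ ≤ 1 * ϱc := mul_le_mul_of_nonneg_right hlvm.le hϱc.le
      _ = ϱc := one_mul _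
  obtain ⟨F1, hF1d⟩ : ∃ F1, min (vm * a) (min (w * (ϱm - b)) qm) = F1 := ⟨_, rfl⟩
  obtain ⟨F2, hF2d⟩ : ∃ F2, min (vm * b) (min (w * (ϱm - c)) qm) = F2 := ⟨_, rfl⟩
  rw [hF1d, hF2d]
  have hDlθ : (0:ℝ) ≤ Dl - θ := by linarith
  have hElθ : (0:ℝ) ≤ El - θ := by linarith
  constructor
  · -- lower bound
    have hF2qm : F2 ≤ qm := by
      rw [← hF2d]; exact le_trans (min_le_right _ _) (min_le_right _ _)
    have eF2qm : lam * F2 ≤ lam * qm := mul_le_mul_of_nonneg_left hF2qm hlam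
    rcases le_or_gt b ϱm with hbm | hbm
    · -- b ≤ ϱm
      have hF2 : F2 ≤ vm * b := by rw [← hF2d]; exact min_le_left _ _
      have hF1 : -(vm * (Dl - θ)) ≤ F1 := by
        rw [← hF1d]
        have g1 : -(vm * (Dl - θ)) ≤ vm * a := by
          have := mul_le_mul_of_nonneg_left ha hvm.le
          linarith [this]
        have g2 : -(vm * (Dl - θ)) ≤ w * (ϱm - b) := by
          have p1 : (0:ℝ) ≤ vm * (Dl - θ) := mul_nonneg hvm.le hDlθ
          have p2 : (0:ℝ) ≤ w * (ϱm - b) := mul_nonneg hw.le (by linarith)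
          linarith
        have g3 : -(vm * (Dl - θ)) ≤ qm := by
          have p1 : (0:ℝ) ≤ vm * (Dl - θ) := mul_nonneg hvm.le hDlθ
          linarith
        exact le_min g1 (le_min g2 g3)
      have e1 : lam * (-(vm * (Dl - θ))) ≤ lam * F1 := mul_le_mul_of_nonneg_left hF1 hlam
      have e2 : lam * F2 ≤ lam * (vm * b) := mul_le_mul_of_nonneg_left hF2 hlam
      have p1 : (0:ℝ) < (1 - lam * vm) * (b + Dl) :=
        mul_pos (by linarith) (by linarith)
      linarith only [e1, e2, p1, hcorv, hb1]
    · -- ϱm < b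
      rcases min_cases (vm * a) (min (w * (ϱm - b)) qm) with ⟨h1, _⟩ | ⟨h1, h1'⟩
      · -- F1 = vm * a
        have hF1 : vm * a ≤ F1 := by rw [← hF1d, h1]
        have e1 : lam * (vm * a) ≤ lam * F1 := mul_le_mul_of_nonneg_left hF1 hlam
        have e0 : lam * (vm * (-(Dl - θ))) ≤ lam * (vm * a) :=
          mul_le_mul_of_nonneg_left (mul_le_mul_of_nonneg_left (by linarith) hvm.le) hlam
        have e3 : lam * vm * (Dl - θ) ≤ 1 * (Dl - θ) :=
          mul_le_mul_of_nonneg_right hlvm.le hDlθ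
        linarith only [e1, e0, e3, eF2qm, hcorθ', hlqm, hbm, hϱ]
      · rcases min_cases (w * (ϱm - b)) qm with ⟨h2, _⟩ | ⟨h2, _⟩
        · -- F1 = w * (ϱm - b)
          have hF1 : w * (ϱm - b) ≤ F1 := by rw [← hF1d, h1, h2]
          have e1 : lam * (w * (ϱm - b)) ≤ lam * F1 := mul_le_mul_of_nonneg_left hF1 hlam
          have p1 : (0:ℝ) < (1 - lam * w) * (b - ϱm) :=
            mul_pos (by linarith) (by linarith)
          linarith only [e1, p1, eF2qm, hcorθ', hlqm, hDl, hϱ]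
        · -- F1 = qm
          have hF1 : qm ≤ F1 := by rw [← hF1d, h1, h2]
          have e1 : lam * qm ≤ lam * F1 := mul_le_mul_of_nonneg_left hF1 hlam
          linarith only [e1, eF2qm, hcorθ', hbm, hDl, hϱ, hϱc]
  · -- upper bound
    have hF1qm : F1 ≤ qm := by
      rw [← hF1d]; exact le_trans (min_le_right _ _) (min_le_right _ _)
    have eF1qm : lam * F1 ≤ lam * qm := mul_le_mul_of_nonneg_left hF1qm hlam
    rcases le_or_gt 0 b with hb0 | hb0
    · -- 0 ≤ b
      have hF1 : F1 ≤ w * (ϱm - b) := by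
        rw [← hF1d]; exact le_trans (min_le_right _ _) (min_le_left _ _)
      have hF2 : -(w * (El - θ)) ≤ F2 := by
        rw [← hF2d]
        have p0 : (0:ℝ) ≤ w * (El - θ) := mul_nonneg hw.le hElθ
        have g1 : -(w * (El - θ)) ≤ vm * b := by
          have : (0:ℝ) ≤ vm * b := mul_nonneg hvm.le hb0
          linarith
        have g2 : -(w * (El - θ)) ≤ w * (ϱm - c) := by
          have := mul_le_mul_of_nonneg_left hc hw.le
          nlinarith [this]
        have g3 : -(w * (El - θ)) ≤ qm := by linarith
        exact le_min g1 (le_min g2 g3)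
      have e1 : lam * F1 ≤ lam * (w * (ϱm - b)) := mul_le_mul_of_nonneg_left hF1 hlam
      have e2 : lam * (-(w * (El - θ))) ≤ lam * F2 := mul_le_mul_of_nonneg_left hF2 hlam
      have p1 : (0:ℝ) < (1 - lam * w) * (ϱm + El - b) :=
        mul_pos (by linarith) (by linarith)
      linarith only [e1, e2, p1, hcorw]
    · -- b < 0
      have hX : -(w * (El - θ)) ≤ min (w * (ϱm - c)) qm := by
        have p0 : (0:ℝ) ≤ w * (El - θ) := mul_nonneg hw.le hElθ
        have g2 : -(w * (El - θ)) ≤ w * (ϱm - c) := by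
          have := mul_le_mul_of_nonneg_left hc hw.le
          nlinarith [this]
        exact le_min g2 (by linarith)
      rcases le_or_gt (vm * b) (-(w * (El - θ))) with hcase | hcase
      · -- vm * b is smaller
        have hF2 : vm * b ≤ F2 := by
          rw [← hF2d]
          exact le_min le_rfl (le_trans hcase hX)
        have e2 : lam * (vm * b) ≤ lam * F2 := mul_le_mul_of_nonneg_left hF2 hlam
        have p1 : (0:ℝ) < (1 - lam * vm) * (-b) :=
          mul_pos (by linarith) (by linarith)
        linarith only [e2, p1, eF1qm, hcorθ, hlqm, hϱ, hEl]
      · -- -(w*(El-θ)) is smaller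
        have hF2 : -(w * (El - θ)) ≤ F2 := by
          rw [← hF2d]
          exact le_min (by linarith) hX
        have e2 : lam * (-(w * (El - θ))) ≤ lam * F2 := mul_le_mul_of_nonneg_left hF2 hlam
        have e3 : lam * w * (El - θ) ≤ 1 * (El - θ) :=
          mul_le_mul_of_nonneg_right hlw.le hElθ
        linarith only [e2, e3, eF1qm, hcorθ, hlqm, hϱ, hb0]

lemma sq_lt_abs' {a b : ℝ} (h : a^2 < b^2) (hb : 0 ≤ b) : |a| < b := by
  rw [abs_lt]; constructor <;> nlinarith

set_option maxHeartbeats 1600000 in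
/-- Proposition 3 / `prop_u_bound`: on an unobservable time interval,
the mean estimation error stays below `𝔥(ε, Γ) = √n·(ϱ_m + ε·(c₀ + (n−2)·𝔠(Γ)))`. -/
theorem stmt8
    (n : ℕ) (hn : 2 ≤ n)
    (ϱm ϱc vm w qm : ℝ) (hϱc : 0 < ϱc) (hϱ : ϱc < ϱm) (hvm : 0 < vm)
    (hwdef : w = ϱc * vm / (ϱm - ϱc)) (hqm : qm = vm * ϱc)
    (Δt Δx : ℝ) (hΔt : 0 < Δt) (hΔx : 0 < Δx)
    (hv1 : vm * Δt / Δx < 1) (hw1 : w * Δt / Δx < 1)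
    (q1 q2 r1 r2 : ℝ) (hq0 : 0 < q1) (hq : q1 < q2) (hr0 : 0 < r1) (hr : r1 < r2)
    (kl : ℕ) (kbar : ℕ∞) (hkl : (kl : ℕ∞) < kbar)
    (ε : ℝ) (hε : 0 < ε)
    (Γ : Matrix (Fin n) (Fin n) ℝ) (hΓ : Γ.PosDef)
    (ρhat ρtrue : ℕ → ℕ → ℝ)
    (htrue : ∀ k l, l < n → ρtrue k l ∈ Set.Icc 0 ϱm)
    (hinit : Real.sqrt (∑ l ∈ Finset.range n, (ρhat kl l - ρtrue kl l) ^ 2) < ε)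
    (Γcpost Γcprior Kc Qc Rc : ℕ → Matrix (Fin 2) (Fin 2) ℝ)
    (hQc : ∀ k, kl ≤ k → (k : ℕ∞) < kbar →
      loewnerLT (q1 • 1) (Qc k) ∧ loewnerLT (Qc k) (q2 • 1))
    (hRc : ∀ k, kl < k → (k : ℕ∞) ≤ kbar →
      loewnerLT (r1 • 1) (Rc k) ∧ loewnerLT (Rc k) (r2 • 1))
    (hΓc0 : (Γcpost kl).PosDef)
    (hcprior : ∀ k, kl ≤ k → (k : ℕ∞) < kbar → Γcprior (k + 1) = Γcpost k + Qc k)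
    (hKc : ∀ k, kl ≤ k → (k : ℕ∞) < kbar →
      Kc (k + 1) = Γcprior (k + 1) * (Γcprior (k + 1) + Rc (k + 1))⁻¹)
    (hcpost : ∀ k, kl ≤ k → (k : ℕ∞) < kbar →
      Γcpost (k + 1) = Γcprior (k + 1) - Kc (k + 1) * Γcprior (k + 1))
    (hbrec : ∀ k, kl ≤ k → (k : ℕ∞) < kbar →
      ![ρhat (k + 1) 0 - ρtrue (k + 1) 0, ρhat (k + 1) (n - 1) - ρtrue (k + 1) (n - 1)] =
        (1 - Kc (k + 1)).mulVec
          ![ρhat k 0 - ρtrue k 0, ρhat k (n - 1) - ρtrue k (n - 1)])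
    (K : ℕ → ℕ → Fin 2 → ℝ)
    (hint : ∀ k, kl ≤ k → (k : ℕ∞) < kbar → ∀ l, 1 ≤ l → l ≤ n - 2 →
      ρhat (k + 1) l = ρhat k l + Δt / Δx *
          (gflux vm w ϱm qm (ρhat k (l - 1)) (ρhat k l) -
            gflux vm w ϱm qm (ρhat k l) (ρhat k (l + 1))) -
        K (k + 1) l 0 * (ρhat k 0 - ρtrue k 0) -
        K (k + 1) l 1 * (ρhat k (n - 1) - ρtrue k (n - 1)))
    (hKbound : ∀ k, kl < k → (k : ℕ∞) ≤ kbar → ∀ l, l < n →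
      |K k l 0| + |K k l 1| ≤ frakK n Δt Δx vm w q1 q2 r1 r2 Γ) :
    ∀ k, kl < k → (k : ℕ∞) ≤ kbar →
      Real.sqrt (∑ l ∈ Finset.range n, (ρhat k l - ρtrue k l) ^ 2) <
        Real.sqrt n * (ϱm + ε * (cZero q1 q2 r1 r2 +
          ((n : ℝ) - 2) * frakCc n Δt Δx vm w q1 q2 r1 r2 Γ)) := by
  -- basic positivity facts
  have hϱm : 0 < ϱm := lt_trans hϱc hϱ
  have hϱmc : 0 < ϱm - ϱc := sub_pos.2 hϱ
  have hw0 : 0 < w := by rw [hwdef]; positivity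
  have hlam0 : (0:ℝ) ≤ Δt / Δx := le_of_lt (by positivity)
  have hlvm : Δt / Δx * vm < 1 := by
    rw [show Δt / Δx * vm = vm * Δt / Δx by ring]; exact hv1
  have hlw : Δt / Δx * w < 1 := by
    rw [show Δt / Δx * w = w * Δt / Δx by ring]; exact hw1
  have hm0 : 0 < min vm w := lt_min hvm hw0
  set κ := frakK n Δt Δx vm w q1 q2 r1 r2 Γ with hκdef
  set c0 := cZero q1 q2 r1 r2 with hc0def
  set 𝔠 := frakCc n Δt Δx vm w q1 q2 r1 r2 Γ with h𝔠def
  have hc01 : 1 ≤ c0 := le_max_left _ _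
  have hc00 : 0 ≤ c0 := le_trans zero_le_one hc01
  set B := c0 * ε with hBdef
  have hεB : ε ≤ B := by
    calc ε = 1 * ε := (one_mul ε).symm
      _ ≤ c0 * ε := mul_le_mul_of_nonneg_right hc01 hε.le
  have hB0 : 0 < B := lt_of_lt_of_le hε hεB
  have hkl1bar : ((kl + 1 : ℕ) : ℕ∞) ≤ kbar := by
    have h1 : ((kl + 1 : ℕ) : ℕ∞) = (kl : ℕ∞) + 1 := by push_cast; rfl
    rw [h1]
    exact Order.add_one_le_of_lt hkl
  have hκ0 : 0 ≤ κ := by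
    have h := hKbound (kl + 1) (Nat.lt_succ_self kl) hkl1bar 0 (by omega)
    exact le_trans (by positivity) h
  set θ := ε * 𝔠 with hθdef
  have hθeq : Δt / Δx * min vm w * θ = κ * B := by
    rw [hθdef, hBdef, h𝔠def, hκdef, hc0def]
    unfold frakCc
    field_simp
  have h𝔠0 : 0 ≤ 𝔠 := by
    rw [h𝔠def]
    unfold frakCc
    rw [← hc0def, ← hκdef]
    exact div_nonneg (mul_nonneg (mul_nonneg hc00 hΔx.le) hκ0) (by positivity)
  have hθ0 : 0 ≤ θ := mul_nonneg hε.le h𝔠0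
  -- Kalman boundary bound
  have key := kalman_key hq0 hq hr0 hr kl kbar Γcpost Γcprior Kc Qc Rc hQc hRc hΓc0 hcprior
    hKc hcpost (fun k => ![ρhat k 0 - ρtrue k 0, ρhat k (n - 1) - ρtrue k (n - 1)]) hbrec
  have hdot : ∀ k : ℕ, (![ρhat k 0 - ρtrue k 0, ρhat k (n - 1) - ρtrue k (n - 1)]) ⬝ᵥ
      (![ρhat k 0 - ρtrue k 0, ρhat k (n - 1) - ρtrue k (n - 1)]) =
      (ρhat k 0 - ρtrue k 0) ^ 2 + (ρhat k (n - 1) - ρtrue k (n - 1)) ^ 2 := by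
    intro k
    simp [dotProduct, Fin.sum_univ_two]
    ring
  have hsums0 : 0 ≤ ∑ l ∈ Finset.range n, (ρhat kl l - ρtrue kl l) ^ 2 :=
    Finset.sum_nonneg fun _ _ => sq_nonneg _
  have hsum_init : ∑ l ∈ Finset.range n, (ρhat kl l - ρtrue kl l) ^ 2 < ε ^ 2 := by
    calc ∑ l ∈ Finset.range n, (ρhat kl l - ρtrue kl l) ^ 2
        = Real.sqrt (∑ l ∈ Finset.range n, (ρhat kl l - ρtrue kl l) ^ 2) *
          Real.sqrt (∑ l ∈ Finset.range n, (ρhat kl l - ρtrue kl l) ^ 2) :=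
          (Real.mul_self_sqrt hsums0).symm
      _ < ε * ε := mul_self_lt_mul_self (Real.sqrt_nonneg _) hinit
      _ = ε ^ 2 := by ring
  have hinit_comp : ∀ l, l < n → (ρhat kl l - ρtrue kl l) ^ 2 < ε ^ 2 := by
    intro l hl
    have h := Finset.single_le_sum (f := fun i => (ρhat kl i - ρtrue kl i) ^ 2)
      (fun i _ => sq_nonneg _) (Finset.mem_range.2 hl)
    exact lt_of_le_of_lt h hsum_init
  have hηkl : (![ρhat kl 0 - ρtrue kl 0, ρhat kl (n - 1) - ρtrue kl (n - 1)]) ⬝ᵥ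
      (![ρhat kl 0 - ρtrue kl 0, ρhat kl (n - 1) - ρtrue kl (n - 1)]) < ε ^ 2 := by
    rw [hdot kl]
    have hne : (0 : ℕ) ≠ n - 1 := by omega
    have h2 : ({0, n - 1} : Finset ℕ) ⊆ Finset.range n := by
      intro x hx
      simp only [Finset.mem_insert, Finset.mem_singleton] at hx
      rcases hx with h | h <;> subst h <;> simp [Finset.mem_range] <;> omega
    calc (ρhat kl 0 - ρtrue kl 0) ^ 2 + (ρhat kl (n - 1) - ρtrue kl (n - 1)) ^ 2
        = ∑ l ∈ ({0, n - 1} : Finset ℕ), (ρhat kl l - ρtrue kl l) ^ 2 := by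
          rw [Finset.sum_pair hne]
      _ ≤ ∑ l ∈ Finset.range n, (ρhat kl l - ρtrue kl l) ^ 2 :=
          Finset.sum_le_sum_of_subset_of_nonneg h2 (fun _ _ _ => sq_nonneg _)
      _ < ε ^ 2 := hsum_init
  have hc0pos : (0:ℝ) < c0 := lt_of_lt_of_le one_pos hc01
  have hbd_sq : ∀ k, kl < k → (k : ℕ∞) ≤ kbar →
      (ρhat k 0 - ρtrue k 0) ^ 2 + (ρhat k (n - 1) - ρtrue k (n - 1)) ^ 2 < B ^ 2 := by
    intro k h1 h2
    have h3 := key k h1 h2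
    rw [hdot k] at h3
    have h4 := mul_lt_mul_of_pos_left hηkl (pow_pos hc0pos 2)
    calc (ρhat k 0 - ρtrue k 0) ^ 2 + (ρhat k (n - 1) - ρtrue k (n - 1)) ^ 2
        ≤ c0 ^ 2 * ((![ρhat kl 0 - ρtrue kl 0, ρhat kl (n - 1) - ρtrue kl (n - 1)]) ⬝ᵥ
          (![ρhat kl 0 - ρtrue kl 0, ρhat kl (n - 1) - ρtrue kl (n - 1)])) := h3
      _ < c0 ^ 2 * ε ^ 2 := h4
      _ = B ^ 2 := by rw [hBdef]; ring
  have habs : ∀ k, kl ≤ k → (k : ℕ∞) ≤ kbar →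
      |ρhat k 0 - ρtrue k 0| < B ∧ |ρhat k (n - 1) - ρtrue k (n - 1)| < B := by
    intro k h1 h2
    rcases eq_or_lt_of_le h1 with heq | hlt
    · subst heq
      constructor
      · exact lt_of_lt_of_le (sq_lt_abs' (hinit_comp 0 (by omega)) hε.le) hεB
      · exact lt_of_lt_of_le (sq_lt_abs' (hinit_comp (n - 1) (by omega)) hε.le) hεB
    · have h3 := hbd_sq k hlt h2
      constructor
      · exact sq_lt_abs' (by linarith only [h3, sq_nonneg (ρhat k (n - 1) - ρtrue k (n - 1))]) hB0.le
      · exact sq_lt_abs' (by linarith only [h3, sq_nonneg (ρhat k 0 - ρtrue k 0)]) hB0.le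
  -- master interior induction
  have master : ∀ k, kl ≤ k → ((k : ℕ∞) ≤ kbar → ∀ l, l < n →
      -(B + (l : ℝ) * θ) < ρhat k l ∧
        ρhat k l < ϱm + B + ((n : ℝ) - 1 - (l : ℝ)) * θ) := by
    intro k hk
    induction k, hk using Nat.le_induction with
    | base =>
      intro _ l hl
      have h2 := abs_lt.1 (sq_lt_abs' (hinit_comp l hl) hε.le)
      obtain ⟨ht1, ht2⟩ := Set.mem_Icc.1 (htrue kl l hl)
      have hl' : (l : ℝ) ≤ (n : ℝ) - 1 := by
        have h3 : (l : ℝ) + 1 ≤ (n : ℝ) := by exact_mod_cast hl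
        linarith
      have hlθ : 0 ≤ (l : ℝ) * θ := mul_nonneg (Nat.cast_nonneg l) hθ0
      have hnlθ : 0 ≤ ((n : ℝ) - 1 - (l : ℝ)) * θ := mul_nonneg (by linarith) hθ0
      constructor
      · linarith only [h2.1, ht1, hεB, hlθ]
      · linarith only [h2.2, ht2, hεB, hnlθ]
    | succ k hk IH =>
      intro hk1 l hl
      have hkcast : (k : ℕ∞) < ((k + 1 : ℕ) : ℕ∞) := by exact_mod_cast Nat.lt_succ_self k
      have hkbar : (k : ℕ∞) < kbar := lt_of_lt_of_le hkcast hk1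
      have Bk := IH hkbar.le
      obtain ⟨habs0, habsn⟩ := habs k hk hkbar.le
      by_cases hint_l : 1 ≤ l ∧ l ≤ n - 2
      · obtain ⟨hl1, hl2⟩ := hint_l
        have heq := hint k hk hkbar l hl1 hl2
        obtain ⟨hbl, hbu⟩ := Bk l hl
        obtain ⟨hal, _⟩ := Bk (l - 1) (by omega)
        obtain ⟨_, hcu⟩ := Bk (l + 1) (by omega)
        have hKb := hKbound (k + 1) (by omega) hk1 l hl
        have hcast1 : ((l - 1 : ℕ) : ℝ) = (l : ℝ) - 1 := by
          rw [Nat.cast_sub hl1]; simp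
        have hcast2 : ((l + 1 : ℕ) : ℝ) = (l : ℝ) + 1 := by push_cast; ring
        have hl1' : (1 : ℝ) ≤ (l : ℝ) := by exact_mod_cast hl1
        have hln2 : (l : ℝ) ≤ (n : ℝ) - 2 := by
          have h3 : (l : ℝ) ≤ ((n - 2 : ℕ) : ℝ) := by exact_mod_cast hl2
          rw [Nat.cast_sub (by omega)] at h3
          push_cast at h3
          linarith
        have hcorr : |(-(K (k + 1) l 0 * (ρhat k 0 - ρtrue k 0)) -
            K (k + 1) l 1 * (ρhat k (n - 1) - ρtrue k (n - 1)))| ≤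
            Δt / Δx * min vm w * θ := by
          rw [hθeq]
          have hrw2 : (-(K (k + 1) l 0 * (ρhat k 0 - ρtrue k 0)) -
              K (k + 1) l 1 * (ρhat k (n - 1) - ρtrue k (n - 1))) =
              -((K (k + 1) l 0 * (ρhat k 0 - ρtrue k 0)) +
                K (k + 1) l 1 * (ρhat k (n - 1) - ρtrue k (n - 1))) := by ring
          rw [hrw2, abs_neg]
          calc |K (k + 1) l 0 * (ρhat k 0 - ρtrue k 0) +
              K (k + 1) l 1 * (ρhat k (n - 1) - ρtrue k (n - 1))|
              ≤ |K (k + 1) l 0 * (ρhat k 0 - ρtrue k 0)| +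
                |K (k + 1) l 1 * (ρhat k (n - 1) - ρtrue k (n - 1))| := abs_add_le _ _
            _ = |K (k + 1) l 0| * |ρhat k 0 - ρtrue k 0| +
                |K (k + 1) l 1| * |ρhat k (n - 1) - ρtrue k (n - 1)| := by
                rw [abs_mul, abs_mul]
            _ ≤ |K (k + 1) l 0| * B + |K (k + 1) l 1| * B := by
                have e1 := mul_le_mul_of_nonneg_left habs0.le (abs_nonneg (K (k + 1) l 0))
                have e2 := mul_le_mul_of_nonneg_left habsn.le (abs_nonneg (K (k + 1) l 1))
                linarith only [e1, e2]
            _ = (|K (k + 1) l 0| + |K (k + 1) l 1|) * B := by ring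
            _ ≤ κ * B := mul_le_mul_of_nonneg_right hKb hB0.le
        have ha' : -((B + (l : ℝ) * θ) - θ) ≤ ρhat k (l - 1) := by
          rw [hcast1] at hal
          have : -((B + (l : ℝ) * θ) - θ) = -(B + ((l : ℝ) - 1) * θ) := by ring
          rw [this]
          exact hal.le
        have hc' : ρhat k (l + 1) ≤ ϱm + ((B + ((n : ℝ) - 1 - (l : ℝ)) * θ) - θ) := by
          rw [hcast2] at hcu
          have : ϱm + ((B + ((n : ℝ) - 1 - (l : ℝ)) * θ) - θ) =
              ϱm + B + ((n : ℝ) - 1 - ((l : ℝ) + 1)) * θ := by ring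
          rw [this]
          exact hcu.le
        have hb1' : -(B + (l : ℝ) * θ) < ρhat k l := hbl
        have hb2' : ρhat k l < ϱm + (B + ((n : ℝ) - 1 - (l : ℝ)) * θ) := by
          have : ϱm + (B + ((n : ℝ) - 1 - (l : ℝ)) * θ) =
              ϱm + B + ((n : ℝ) - 1 - (l : ℝ)) * θ := by ring
          rw [this]
          exact hbu
        have hDl' : θ ≤ B + (l : ℝ) * θ := by
          have h5 : 0 ≤ ((l : ℝ) - 1) * θ := mul_nonneg (by linarith only [hl1']) hθ0
          linarith only [h5, hB0.le]
        have hEl' : θ ≤ B + ((n : ℝ) - 1 - (l : ℝ)) * θ := by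
          have h5 : 0 ≤ ((n : ℝ) - 2 - (l : ℝ)) * θ := mul_nonneg (by linarith only [hln2]) hθ0
          linarith only [h5, hB0.le]
        have hstep := interior_step hvm hw0 hϱc hϱ hqm hlam0 hlvm hlw hθ0 hcorr
          ha' hb1' hb2' hc' hDl' hEl'
        have hrw : ρhat (k + 1) l = ρhat k l +
            Δt / Δx * (gflux vm w ϱm qm (ρhat k (l - 1)) (ρhat k l) -
              gflux vm w ϱm qm (ρhat k l) (ρhat k (l + 1))) +
            (-(K (k + 1) l 0 * (ρhat k 0 - ρtrue k 0)) -
              K (k + 1) l 1 * (ρhat k (n - 1) - ρtrue k (n - 1))) := by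
          rw [heq]; ring
        rw [hrw]
        exact ⟨hstep.1, by linarith only [hstep.2]⟩
      · have hl0 : l = 0 ∨ l = n - 1 := by omega
        obtain ⟨hb0', hbn'⟩ := habs (k + 1) (by omega) hk1
        obtain ⟨ht1, ht2⟩ := Set.mem_Icc.1 (htrue (k + 1) l hl)
        have hn2' : (2 : ℝ) ≤ (n : ℝ) := by exact_mod_cast hn
        have hnlθ' : 0 ≤ ((n : ℝ) - 1) * θ := mul_nonneg (by linarith only [hn2']) hθ0
        rcases hl0 with h | h
        · subst h
          have h6 := abs_lt.1 hb0'
          push_cast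
          constructor
          · linarith only [h6.1, ht1]
          · linarith only [h6.2, ht2, hnlθ']
        · subst h
          have h6 := abs_lt.1 hbn'
          have hc : ((n - 1 : ℕ) : ℝ) = (n : ℝ) - 1 := by
            rw [Nat.cast_sub (by omega)]; simp
          rw [hc]
          constructor
          · linarith only [h6.1, ht1, hnlθ']
          · linarith only [h6.2, ht2]
  -- conclusion
  intro k hklk hkbark
  have hms := master k (le_of_lt hklk) hkbark
  have hn2 : (2 : ℝ) ≤ (n : ℝ) := by exact_mod_cast hn
  have hn2θ : 0 ≤ ((n : ℝ) - 2) * θ := mul_nonneg (by linarith) hθ0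
  have hDeq : ϱm + ε * (c0 + ((n : ℝ) - 2) * 𝔠) = ϱm + B + ((n : ℝ) - 2) * θ := by
    rw [hBdef, hθdef]; ring
  rw [hDeq]
  have hDpos : 0 < ϱm + B + ((n : ℝ) - 2) * θ := by linarith only [hϱm, hB0, hn2θ]
  have hterm : ∀ l ∈ Finset.range n,
      (ρhat k l - ρtrue k l) ^ 2 < (ϱm + B + ((n : ℝ) - 2) * θ) ^ 2 := by
    intro l hlmem
    have hl : l < n := Finset.mem_range.1 hlmem
    obtain ⟨ht1, ht2⟩ := Set.mem_Icc.1 (htrue k l hl)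
    by_cases hbl : l = 0 ∨ l = n - 1
    · have h := habs k (le_of_lt hklk) hkbark
      have habs_l : |ρhat k l - ρtrue k l| < B := by
        rcases hbl with h' | h'
        · subst h'; exact h.1
        · subst h'; exact h.2
      have h7 : |ρhat k l - ρtrue k l| < ϱm + B + ((n : ℝ) - 2) * θ :=
        lt_of_lt_of_le habs_l (by linarith only [hϱm, hn2θ])
      obtain ⟨h8, h9⟩ := abs_lt.1 h7
      exact sq_lt_sq' h8 h9
    · have hil : 1 ≤ l ∧ l ≤ n - 2 := by omega
      obtain ⟨h1, h2⟩ := hms l hl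
      have hl1' : (1 : ℝ) ≤ (l : ℝ) := by exact_mod_cast hil.1
      have hln2 : (l : ℝ) ≤ (n : ℝ) - 2 := by
        have h3 : (l : ℝ) ≤ ((n - 2 : ℕ) : ℝ) := by exact_mod_cast hil.2
        rw [Nat.cast_sub (by omega)] at h3
        push_cast at h3
        linarith
      have e1 : 0 ≤ ((n : ℝ) - 2 - (l : ℝ)) * θ := mul_nonneg (by linarith only [hln2]) hθ0
      have e2 : 0 ≤ ((l : ℝ) - 1) * θ := mul_nonneg (by linarith only [hl1']) hθ0
      have h8 : -(ϱm + B + ((n : ℝ) - 2) * θ) < ρhat k l - ρtrue k l := by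
        linarith only [h1, ht2, e1]
      have h9 : ρhat k l - ρtrue k l < ϱm + B + ((n : ℝ) - 2) * θ := by
        linarith only [h2, ht1, e2]
      exact sq_lt_sq' h8 h9
  have hsum : ∑ l ∈ Finset.range n, (ρhat k l - ρtrue k l) ^ 2 <
      (n : ℝ) * (ϱm + B + ((n : ℝ) - 2) * θ) ^ 2 := by
    calc ∑ l ∈ Finset.range n, (ρhat k l - ρtrue k l) ^ 2
        < ∑ _l ∈ Finset.range n, (ϱm + B + ((n : ℝ) - 2) * θ) ^ 2 :=
          Finset.sum_lt_sum_of_nonempty (Finset.nonempty_range_iff.2 (by omega)) hterm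
      _ = (n : ℝ) * (ϱm + B + ((n : ℝ) - 2) * θ) ^ 2 := by
          rw [Finset.sum_const, Finset.card_range, nsmul_eq_mul]
  have hfin := Real.sqrt_lt_sqrt (Finset.sum_nonneg fun _ _ => sq_nonneg _) hsum
  calc Real.sqrt (∑ l ∈ Finset.range n, (ρhat k l - ρtrue k l) ^ 2)
      < Real.sqrt ((n : ℝ) * (ϱm + B + ((n : ℝ) - 2) * θ) ^ 2) := hfin
    _ = Real.sqrt (n : ℝ) * (ϱm + B + ((n : ℝ) - 2) * θ) := by
        rw [Real.sqrt_mul (Nat.cast_nonneg n), Real.sqrt_sq hDpos.le]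


end
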